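/- For every n ≥ 1 and every m ≥ 0, the polynomial H_m^{(n)}(X) divides H_{3m+1}^{(n)}(X) in ℝ[X]. -/

import Mathlib

open Finset Polynomial

/-- For any `n ≥ 1` and `m ≥ 0`, `H_m^{(n)}(X)` divides `H_{3m+1}^{(n)}(X)` in `ℝ[X]`,
where `H_m^{(n)}(X) = ∏_{k=1}^{m} (X + (2 cos(2πk/(2m+1)) + 2)^n)`. -/
theorem H_dvd_H (n m : ℕ) (hn : 1 ≤ n) :
    (∏ k ∈ Finset.Icc 1 m,
        ((X : ℝ[X]) + C ((2 * Real.cos (2 * Real.pi * k / (2 * m + 1)) + 2) ^ n))) ∣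
      ∏ k ∈ Finset.Icc 1 (3 * m + 1),
        ((X : ℝ[X]) + C ((2 * Real.cos (2 * Real.pi * k / (2 * (3 * m + 1) + 1)) + 2) ^ n)) := by
  set f : ℕ → ℝ[X] := fun j =>
    (X : ℝ[X]) + C ((2 * Real.cos (2 * Real.pi * j / (2 * (3 * m + 1) + 1)) + 2) ^ n) with hf
  have h1 : (∏ k ∈ Finset.Icc 1 m,
      ((X : ℝ[X]) + C ((2 * Real.cos (2 * Real.pi * k / (2 * m + 1)) + 2) ^ n)))
      = ∏ k ∈ Finset.Icc 1 m, f (3 * k) := by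
    apply Finset.prod_congr rfl
    intro k _
    have hm : (2 * (m : ℝ) + 1) ≠ 0 := by positivity
    have harg : 2 * Real.pi * k / (2 * m + 1)
        = 2 * Real.pi * (3 * k : ℕ) / (2 * ((3 * m + 1 : ℕ) : ℝ) + 1) := by
      push_cast
      field_simp
      ring
    rw [hf, harg]; push_cast; ring_nf
  rw [h1]
  have h2 : ∏ k ∈ Finset.Icc 1 m, f (3 * k)
      = ∏ j ∈ (Finset.Icc 1 m).image (fun k => 3 * k), f j := by
    rw [Finset.prod_image]
    intro a _ b _ h
    simp only at h
    omega
  rw [h2]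
  apply Finset.prod_dvd_prod_of_subset
  intro j hj
  simp only [Finset.mem_image, Finset.mem_Icc] at hj ⊢
  obtain ⟨k, hk, rfl⟩ := hj
  omega
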